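/- For a root ideal Ψ with invariants as above and convention 𝚎_{ℓ+1}(Ψ) = n+1, ℓ = ℓ(Ψ): Σ_{j=1}^{ℓ} Σ_{k = 𝚎_j(Ψ)}^{𝚎_{j+1}(Ψ)−1} (𝚒_j(Ψ) + n − k) = ℓ(w₀^Ψ) + |Ψ|, where ℓ(w₀^Ψ) = (n − e_1(Ψ))(n − d_1(Ψ))/2 and |Ψ| is the cardinality of Ψ. -/

import Mathlib

/-- `d_i(Ψ) = #{j : i ≤ j ≤ n, (i,j) ∉ Ψ}`. -/
def dInv (n : ℕ) (Ψ : Finset (ℕ × ℕ)) (i : ℕ) : ℕ :=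
  ((Finset.Icc i n).filter (fun j => (i, j) ∉ Ψ)).card

/-- `e_i(Ψ) = i + d_i(Ψ)`. -/
def eInv (n : ℕ) (Ψ : Finset (ℕ × ℕ)) (i : ℕ) : ℕ := i + dInv n Ψ i

/-- `I(Ψ) = {1 ≤ i < n : e_i(Ψ) ≤ n and d_i(Ψ) ≤ d_{i+1}(Ψ)}`. -/
def Iset (n : ℕ) (Ψ : Finset (ℕ × ℕ)) : Finset ℕ :=
  (Finset.Ico 1 n).filter (fun i => eInv n Ψ i ≤ n ∧ dInv n Ψ i ≤ dInv n Ψ (i + 1))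

open Finset

lemma dInv_le_card (n : ℕ) (Ψ : Finset (ℕ × ℕ)) (i : ℕ) : dInv n Ψ i ≤ n + 1 - i := by
  calc dInv n Ψ i ≤ (Finset.Icc i n).card := Finset.card_filter_le _ _
  _ = n + 1 - i := Nat.card_Icc i n

lemma eInv_le (n : ℕ) (Ψ : Finset (ℕ × ℕ)) (i : ℕ) (hi : i ≤ n) : eInv n Ψ i ≤ n + 1 := by
  have := dInv_le_card n Ψ i
  unfold eInv
  omega

lemma eInv_ge (n : ℕ) (Ψ : Finset (ℕ × ℕ)) (i : ℕ) : i ≤ eInv n Ψ i :=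
  Nat.le_add_right _ _

lemma eInv_n (n : ℕ) (Ψ : Finset (ℕ × ℕ))
    (hsub : ∀ p ∈ Ψ, 1 ≤ p.1 ∧ p.1 < p.2 ∧ p.2 ≤ n) : eInv n Ψ n = n + 1 := by
  have hnn : (n, n) ∉ Ψ := fun h => by have := (hsub _ h).2.1; simp at this
  have : dInv n Ψ n = 1 := by
    unfold dInv
    rw [Finset.Icc_self, Finset.filter_singleton, if_pos hnn, Finset.card_singleton]
  unfold eInv; omega

lemma eInv_step (n : ℕ) (Ψ : Finset (ℕ × ℕ))
    (hsub : ∀ p ∈ Ψ, 1 ≤ p.1 ∧ p.1 < p.2 ∧ p.2 ≤ n)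
    (hup : ∀ i j i' : ℕ, (i, j) ∈ Ψ → 1 ≤ i' → i' < i → (i', j) ∈ Ψ)
    (i : ℕ) (h1 : 1 ≤ i) (h2 : i ≤ n) : eInv n Ψ i ≤ eInv n Ψ (i + 1) := by
  have hii : (i, i) ∉ Ψ := fun h => by have := (hsub _ h).2.1; simp at this
  have hicc : Finset.Icc i n = insert i (Finset.Icc (i + 1) n) := by
    ext a; simp [Finset.mem_insert]; omega
  have hdi : dInv n Ψ i = ((Finset.Icc (i + 1) n).filter (fun j => (i, j) ∉ Ψ)).card + 1 := by
    unfold dInv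
    rw [hicc, Finset.filter_insert, if_pos hii,
      Finset.card_insert_of_notMem (by simp)]
  have hsubset : (Finset.Icc (i + 1) n).filter (fun j => (i, j) ∉ Ψ) ⊆
      (Finset.Icc (i + 1) n).filter (fun j => (i + 1, j) ∉ Ψ) := by
    intro j hj
    simp only [Finset.mem_filter] at *
    exact ⟨hj.1, fun hmem => hj.2 (hup (i + 1) j i hmem h1 (by omega))⟩
  have hcard := Finset.card_le_card hsubset
  have : ((Finset.Icc (i + 1) n).filter (fun j => (i + 1, j) ∉ Ψ)).card = dInv n Ψ (i + 1) := rfl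
  unfold eInv
  omega

lemma eInv_mono (n : ℕ) (Ψ : Finset (ℕ × ℕ))
    (hsub : ∀ p ∈ Ψ, 1 ≤ p.1 ∧ p.1 < p.2 ∧ p.2 ≤ n)
    (hup : ∀ i j i' : ℕ, (i, j) ∈ Ψ → 1 ≤ i' → i' < i → (i', j) ∈ Ψ)
    (i i' : ℕ) (h1 : 1 ≤ i) (h2 : i ≤ i') (h3 : i' ≤ n + 1) : eInv n Ψ i ≤ eInv n Ψ i' := by
  induction i', h2 using Nat.le_induction with
  | base => exact le_rfl
  | succ i' hii' IH =>
    exact le_trans (IH (by omega)) (eInv_step n Ψ hsub hup i' (by omega) (by omega))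

/-- every value `e_i ≤ n` is attained on `I(Ψ)`. -/
lemma exists_mem_Iset (n : ℕ) (Ψ : Finset (ℕ × ℕ))
    (hsub : ∀ p ∈ Ψ, 1 ≤ p.1 ∧ p.1 < p.2 ∧ p.2 ≤ n)
    (hup : ∀ i j i' : ℕ, (i, j) ∈ Ψ → 1 ≤ i' → i' < i → (i', j) ∈ Ψ) :
    ∀ m i, 1 ≤ i → i ≤ n → eInv n Ψ i ≤ n → n - i ≤ m →
    ∃ i' ∈ Iset n Ψ, eInv n Ψ i' = eInv n Ψ i := by
  intro m
  induction m with
  | zero =>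
    intro i h1 h2 h3 h4
    have hin : i = n := by omega
    rw [hin] at h3
    have := eInv_n n Ψ hsub
    omega
  | succ m IH =>
    intro i h1 h2 h3 h4
    by_cases hin : i = n
    · rw [hin] at h3; have := eInv_n n Ψ hsub; omega
    have hlt : i < n := by omega
    have hstep := eInv_step n Ψ hsub hup i h1 h2
    rcases eq_or_lt_of_le hstep with heq | hlt2
    · obtain ⟨i', hi', he⟩ := IH (i + 1) (by omega) (by omega) (by omega) (by omega)
      exact ⟨i', hi', by omega⟩
    · refine ⟨i, ?_, rfl⟩
      simp only [Iset, Finset.mem_filter, Finset.mem_Ico]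
      refine ⟨⟨h1, hlt⟩, h3, ?_⟩
      simp only [eInv] at hlt2
      omega

lemma row_card (n : ℕ) (Ψ : Finset (ℕ × ℕ)) (i : ℕ) (hi : i ≤ n) :
    ((Finset.Icc i n).filter (fun j => (i, j) ∈ Ψ)).card = (Finset.Icc (eInv n Ψ i) n).card := by
  classical
  have h1 : ((Finset.Icc i n).filter (fun j => (i, j) ∈ Ψ)).card
      + ((Finset.Icc i n).filter (fun j => ¬ (i, j) ∈ Ψ)).card = (Finset.Icc i n).card :=
    Finset.card_filter_add_card_filter_not _
  have h2 : ((Finset.Icc i n).filter (fun j => ¬ (i, j) ∈ Ψ)).card = dInv n Ψ i := rfl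
  have h3 : (Finset.Icc i n).card = n + 1 - i := Nat.card_Icc i n
  have h4 : (Finset.Icc (eInv n Ψ i) n).card = n + 1 - eInv n Ψ i := Nat.card_Icc _ n
  have h5 := dInv_le_card n Ψ i
  simp only [eInv] at *
  omega

lemma psi_card (n : ℕ) (Ψ : Finset (ℕ × ℕ))
    (hsub : ∀ p ∈ Ψ, 1 ≤ p.1 ∧ p.1 < p.2 ∧ p.2 ≤ n) :
    Ψ.card = ∑ i ∈ Finset.Icc 1 n, (Finset.Icc (eInv n Ψ i) n).card := by
  classical
  rw [Finset.card_eq_sum_card_fiberwise (f := fun p => p.1) (t := Finset.Icc 1 n)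
    (fun p hp => by have := hsub p hp; simp [Finset.mem_Icc]; omega)]
  apply Finset.sum_congr rfl
  intro i hi
  simp only [Finset.mem_Icc] at hi
  rw [← row_card n Ψ i hi.2]
  have himg : Ψ.filter (fun p => p.1 = i)
      = ((Finset.Icc i n).filter (fun j => (i, j) ∈ Ψ)).image (fun j => (i, j)) := by
    ext ⟨a, b⟩
    simp only [Finset.mem_filter, Finset.mem_image, Finset.mem_Icc]
    constructor
    · rintro ⟨hp, ha⟩
      subst ha
      have h' := hsub (a, b) hp
      simp only at h'
      exact ⟨b, ⟨⟨by omega, by omega⟩, hp⟩, rfl⟩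
    · rintro ⟨j, ⟨hj, hjΨ⟩, heq⟩
      simp only [Prod.mk.injEq] at heq
      obtain ⟨rfl, rfl⟩ := heq
      exact ⟨hjΨ, rfl⟩
  rw [himg, Finset.card_image_of_injective _ (fun x y h => by simpa using h)]

lemma sum_f_eq (n : ℕ) (Ψ : Finset (ℕ × ℕ)) :
    ∑ k ∈ Finset.Icc 1 n, ((Finset.Icc 1 n).filter (fun i => eInv n Ψ i ≤ k)).card
      = ∑ i ∈ Finset.Icc 1 n, (Finset.Icc (eInv n Ψ i) n).card := by
  classical
  have h1 : ∀ k, ((Finset.Icc 1 n).filter (fun i => eInv n Ψ i ≤ k)).card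
      = ∑ i ∈ Finset.Icc 1 n, if eInv n Ψ i ≤ k then 1 else 0 := fun k =>
    Finset.card_filter _ _
  rw [Finset.sum_congr rfl (fun k _ => h1 k), Finset.sum_comm]
  apply Finset.sum_congr rfl
  intro i hi
  simp only [Finset.mem_Icc] at hi
  have h2 : ∑ k ∈ Finset.Icc 1 n, (if eInv n Ψ i ≤ k then 1 else 0)
      = ((Finset.Icc 1 n).filter (fun k => eInv n Ψ i ≤ k)).card :=
    (Finset.card_filter _ _).symm
  rw [h2]
  congr 1
  ext k
  simp only [Finset.mem_filter, Finset.mem_Icc]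
  have := eInv_ge n Ψ i
  omega

lemma gauss_aux : ∀ m a : ℕ, (∑ k ∈ Finset.Ico a (a + m), (a + m - 1 - k)) * 2 = m * (m - 1) := by
  intro m
  induction m with
  | zero => intro a; simp
  | succ m IH =>
    intro a
    have hsplit : Finset.Ico a (a + (m + 1)) = Finset.Ico a (a + m) ∪ {a + m} := by
      ext k; simp [Finset.mem_Ico, Finset.mem_union]; omega
    rw [hsplit, Finset.sum_union (by simp)]
    have h1 : ∑ k ∈ Finset.Ico a (a + m), (a + (m + 1) - 1 - k)
        = (∑ k ∈ Finset.Ico a (a + m), (a + m - 1 - k)) + ∑ k ∈ Finset.Ico a (a + m), 1 := by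
      rw [← Finset.sum_add_distrib]
      apply Finset.sum_congr rfl
      intro k hk
      simp only [Finset.mem_Ico] at hk
      omega
    have h2 : ∑ k ∈ ({a + m} : Finset ℕ), (a + (m + 1) - 1 - k) = 0 := by simp
    have h3 : ∑ k ∈ Finset.Ico a (a + m), 1 = m := by simp
    have h4 := IH a
    have h5 : (m + 1) * (m + 1 - 1) = m * (m - 1) + 2 * m := by
      cases m with
      | zero => simp
      | succ p => simp [Nat.add_sub_cancel]; ring
    omega

lemma ee_chain (ee : ℕ → ℕ) : ∀ l, (∀ j, 1 ≤ j → j ≤ l → ee j ≤ ee (j + 1)) →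
    ee 1 ≤ ee (l + 1) := by
  intro l
  induction l with
  | zero => intro _; exact le_rfl
  | succ l IH =>
    intro h
    exact le_trans (IH fun j h1 h2 => h j h1 (by omega)) (h (l + 1) (by omega) le_rfl)

lemma sum_union_Ico (g : ℕ → ℕ) (ee : ℕ → ℕ) : ∀ l, (∀ j, 1 ≤ j → j ≤ l → ee j ≤ ee (j + 1)) →
    ∑ j ∈ Finset.Icc 1 l, ∑ k ∈ Finset.Ico (ee j) (ee (j + 1)), g k
      = ∑ k ∈ Finset.Ico (ee 1) (ee (l + 1)), g k := by
  intro l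
  induction l with
  | zero => intro _; simp
  | succ l IH =>
    intro h
    rw [Finset.sum_Icc_succ_top (by omega), IH (fun j h1 h2 => h j h1 (by omega)),
      Finset.sum_Ico_consecutive _ (ee_chain ee l (fun j h1 h2 => h j h1 (by omega)))
        (h (l + 1) (by omega) le_rfl)]

/-- With the convention `𝚎_{ℓ+1}(Ψ) = n + 1`,
`Σ_{j=1}^{ℓ} Σ_{k=𝚎_j}^{𝚎_{j+1}−1} (𝚒_j + n − k) = ℓ(w₀^Ψ) + |Ψ|`,
where `ℓ(w₀^Ψ) = (n − e_1(Ψ))(n − d_1(Ψ))/2`. -/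
theorem dimension_sum_formula (n : ℕ) (Ψ : Finset (ℕ × ℕ))
    (hsub : ∀ p ∈ Ψ, 1 ≤ p.1 ∧ p.1 < p.2 ∧ p.2 ≤ n)
    (hup : ∀ i j i' : ℕ, (i, j) ∈ Ψ → 1 ≤ i' → i' < i → (i', j) ∈ Ψ)
    (hright : ∀ i j j' : ℕ, (i, j) ∈ Ψ → j < j' → j' ≤ n → (i, j') ∈ Ψ)
    (l : ℕ) (hl : l = (Iset n Ψ).card)
    (ee ii : ℕ → ℕ)
    (hmono : ∀ j j' : ℕ, 1 ≤ j → j < j' → j' ≤ l → ee j < ee j')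
    (hii : ∀ j : ℕ, 1 ≤ j → j ≤ l → ii j ∈ Iset n Ψ ∧ eInv n Ψ (ii j) = ee j)
    (hsurj : ∀ i ∈ Iset n Ψ, ∃ j : ℕ, 1 ≤ j ∧ j ≤ l ∧ ee j = eInv n Ψ i)
    (htop : ee (l + 1) = n + 1) :
    ∑ j ∈ Finset.Icc 1 l, ∑ k ∈ Finset.Ico (ee j) (ee (j + 1)), (ii j + n - k)
      = (n - eInv n Ψ 1) * (n - dInv n Ψ 1) / 2 + Ψ.card := by
  classical
  have hrow := psi_card n Ψ hsub
  by_cases hl0 : l = 0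
  · -- degenerate case: `I(Ψ)` is empty
    have hIempty : Iset n Ψ = ∅ := Finset.card_eq_zero.mp (by omega)
    have hbig : ∀ i, 1 ≤ i → i ≤ n → n < eInv n Ψ i := by
      intro i h1 h2
      by_contra h
      push_neg at h
      obtain ⟨i', hi', _⟩ := exists_mem_Iset n Ψ hsub hup n i h1 h2 h (by omega)
      rw [hIempty] at hi'
      simp at hi'
    have hΨ0 : Ψ.card = 0 := by
      rw [hrow]
      apply Finset.sum_eq_zero
      intro i hi
      simp only [Finset.mem_Icc] at hi
      have := hbig i hi.1 hi.2
      rw [Nat.card_Icc]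
      omega
    have he1 : n < eInv n Ψ 1 := by
      rcases Nat.eq_zero_or_pos n with h0 | h0
      · subst h0
        have : eInv 0 Ψ 1 = 1 := by simp [eInv, dInv]
        omega
      · exact hbig 1 le_rfl h0
    rw [hl0]
    simp
    have : n - eInv n Ψ 1 = 0 := by omega
    rw [this, hΨ0]
    simp
  · -- main case : l ≥ 1
    have hl1 : 1 ≤ l := by omega
    obtain ⟨hii1mem, hii1e⟩ := hii 1 le_rfl hl1
    simp only [Iset, Finset.mem_filter, Finset.mem_Ico] at hii1mem
    obtain ⟨⟨hii1ge, hii1lt⟩, hii1en, _⟩ := hii1mem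
    have hE_le_n : ee 1 ≤ n := by rw [← hii1e]; exact hii1en
    have hE_ge1 : 1 ≤ ee 1 := by
      rw [← hii1e]; exact le_trans hii1ge (eInv_ge n Ψ _)
    have hn1 : 1 ≤ n := by omega
    -- e_1 = ee 1
    have he1E : eInv n Ψ 1 = ee 1 := by
      have h1n : eInv n Ψ 1 ≤ eInv n Ψ (ii 1) :=
        eInv_mono n Ψ hsub hup 1 (ii 1) le_rfl hii1ge (by omega)
      have h1n' : eInv n Ψ 1 ≤ n := by omega
      obtain ⟨i', hi', he'⟩ := exists_mem_Iset n Ψ hsub hup n 1 le_rfl hn1 h1n' (by omega)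
      obtain ⟨j, hj1, hjl, hej⟩ := hsurj i' hi'
      have hEj : ee 1 ≤ ee j := by
        rcases eq_or_lt_of_le hj1 with h | h
        · rw [← h]
        · exact le_of_lt (hmono 1 j le_rfl h hjl)
      omega
    set f : ℕ → ℕ := fun k => ((Finset.Icc 1 n).filter (fun i => eInv n Ψ i ≤ k)).card with hf
    have hchain : ∀ j, 1 ≤ j → j ≤ l → ee j ≤ ee (j + 1) := by
      intro j h1 h2
      rcases eq_or_lt_of_le h2 with h | h
      · subst h
        obtain ⟨hm, he⟩ := hii j h1 le_rfl
        simp only [Iset, Finset.mem_filter, Finset.mem_Ico] at hm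
        rw [htop]
        omega
      · exact le_of_lt (hmono j (j + 1) h1 (by omega) (by omega))
    -- Claim 1
    have hclaim : ∀ j, 1 ≤ j → j ≤ l → ∀ k, ee j ≤ k → k < ee (j + 1) →
        ii j + n - k = f k + (n - k) := by
      intro j hj1 hjl k hk1 hk2
      obtain ⟨hmemj, hej⟩ := hii j hj1 hjl
      simp only [Iset, Finset.mem_filter, Finset.mem_Ico] at hmemj
      obtain ⟨⟨hij1, hijn⟩, hejn, hd⟩ := hmemj
      have hkn : k ≤ n := by
        have hnext1 : ee (j + 1) ≤ n + 1 := by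
          rcases eq_or_lt_of_le hjl with h | h
          · rw [h, htop]
          · obtain ⟨hm, he⟩ := hii (j + 1) (by omega) (by omega)
            simp only [Iset, Finset.mem_filter, Finset.mem_Ico] at hm
            omega
        omega
      have hlt : eInv n Ψ (ii j) < eInv n Ψ (ii j + 1) := by
        have e1 : eInv n Ψ (ii j) = ii j + dInv n Ψ (ii j) := rfl
        have e2 : eInv n Ψ (ii j + 1) = (ii j + 1) + dInv n Ψ (ii j + 1) := rfl
        omega
      have hnext : k < eInv n Ψ (ii j + 1) := by
        by_cases hb : eInv n Ψ (ii j + 1) ≤ n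
        · obtain ⟨i', hi', he'⟩ :=
            exists_mem_Iset n Ψ hsub hup n (ii j + 1) (by omega) (by omega) hb (by omega)
          obtain ⟨j', hj'1, hj'l, hej'⟩ := hsurj i' hi'
          have h1 : ee j < ee j' := by rw [hej', he', ← hej]; exact hlt
          have hjj' : j < j' := by
            by_contra hc
            push_neg at hc
            rcases eq_or_lt_of_le hc with h | h
            · rw [h] at h1; omega
            · have := hmono j' j hj'1 h hjl; omega
          have h2 : ee (j + 1) ≤ ee j' := by
            rcases eq_or_lt_of_le (show j + 1 ≤ j' by omega) with h | h
            · rw [h]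
            · exact le_of_lt (hmono (j + 1) j' (by omega) h hj'l)
          omega
        · omega
      have hfilter : (Finset.Icc 1 n).filter (fun i => eInv n Ψ i ≤ k)
          = Finset.Icc 1 (ii j) := by
        ext i
        simp only [Finset.mem_filter, Finset.mem_Icc]
        constructor
        · rintro ⟨⟨h1, h2⟩, h3⟩
          refine ⟨h1, ?_⟩
          by_contra hc
          push_neg at hc
          have := eInv_mono n Ψ hsub hup (ii j + 1) i (by omega) hc (by omega)
          omega
        · rintro ⟨h1, h2⟩
          refine ⟨⟨h1, by omega⟩, ?_⟩
          have := eInv_mono n Ψ hsub hup i (ii j) h1 h2 (by omega)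
          omega
      have hfk : f k = ii j := by
        rw [hf]
        simp only
        rw [hfilter, Nat.card_Icc]
        omega
      omega
    -- rewrite the left-hand side
    have hLHS : ∑ j ∈ Finset.Icc 1 l, ∑ k ∈ Finset.Ico (ee j) (ee (j + 1)), (ii j + n - k)
        = ∑ k ∈ Finset.Ico (ee 1) (n + 1), (f k + (n - k)) := by
      rw [← htop, ← sum_union_Ico (fun k => f k + (n - k)) ee l hchain]
      apply Finset.sum_congr rfl
      intro j hj
      simp only [Finset.mem_Icc] at hj
      apply Finset.sum_congr rfl
      intro k hk
      simp only [Finset.mem_Ico] at hk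
      exact hclaim j hj.1 hj.2 k hk.1 hk.2
    rw [hLHS, Finset.sum_add_distrib]
    -- first part : Σ f = |Ψ|
    have hfsmall : ∀ k, k < ee 1 → f k = 0 := by
      intro k hk
      rw [hf]
      simp only
      rw [Finset.card_eq_zero, Finset.filter_eq_empty_iff]
      intro i hi
      simp only [Finset.mem_Icc] at hi
      have := eInv_mono n Ψ hsub hup 1 i le_rfl hi.1 (by omega)
      omega
    have hpartA : ∑ k ∈ Finset.Ico (ee 1) (n + 1), f k = Ψ.card := by
      have hsplit : ∑ k ∈ Finset.Ico 1 (ee 1), f k + ∑ k ∈ Finset.Ico (ee 1) (n + 1), f k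
          = ∑ k ∈ Finset.Ico 1 (n + 1), f k :=
        Finset.sum_Ico_consecutive f hE_ge1 (by omega)
      have hzero : ∑ k ∈ Finset.Ico 1 (ee 1), f k = 0 :=
        Finset.sum_eq_zero fun k hk => hfsmall k (Finset.mem_Ico.mp hk).2
      have hIcoIcc : Finset.Ico 1 (n + 1) = Finset.Icc 1 n := by
        ext k; simp [Finset.mem_Ico, Finset.mem_Icc]
      have : ∑ k ∈ Finset.Ico 1 (n + 1), f k = Ψ.card := by
        rw [hIcoIcc, hf]
        simp only
        rw [sum_f_eq n Ψ, ← hrow]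
      omega
    -- second part : Gauss sum
    have hpartB : ∑ k ∈ Finset.Ico (ee 1) (n + 1), (n - k)
        = (n - eInv n Ψ 1) * (n - dInv n Ψ 1) / 2 := by
      have hg := gauss_aux (n + 1 - ee 1) (ee 1)
      have hEn : ee 1 + (n + 1 - ee 1) = n + 1 := by omega
      rw [hEn] at hg
      have hcongr : ∑ k ∈ Finset.Ico (ee 1) (n + 1), (n + 1 - 1 - k)
          = ∑ k ∈ Finset.Ico (ee 1) (n + 1), (n - k) := by
        apply Finset.sum_congr rfl
        intro k hk
        omega
      rw [hcongr] at hg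
      have hd1 : eInv n Ψ 1 = 1 + dInv n Ψ 1 := rfl
      have hm1 : n + 1 - ee 1 = n - dInv n Ψ 1 := by omega
      have hm2 : n + 1 - ee 1 - 1 = n - eInv n Ψ 1 := by omega
      rw [hm1] at hg
      have hm2' : n - dInv n Ψ 1 - 1 = n - eInv n Ψ 1 := by omega
      rw [hm2'] at hg
      have hcomm : (n - dInv n Ψ 1) * (n - eInv n Ψ 1)
          = (n - eInv n Ψ 1) * (n - dInv n Ψ 1) := Nat.mul_comm _ _
      rw [hcomm] at hg
      omega
    rw [hpartA, hpartB]
    omega
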